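/- Let G be a Hausdorff Boolean topological group that is hereditarily extremally disconnected, i.e., every subspace of G is extremally disconnected. Then every closed linearly independent subset S of G contains at most one point that is not isolated in the subspace S; equivalently, for any two distinct points a, b ∈ S, at least one of a and b is isolated in the subspace S. -/

import Mathlib

/-- In a hereditarily extremally disconnected Hausdorff Boolean topological group,
every closed linearly independent subset contains at most one point that is not
isolated in it: for any two distinct points of the set, at least one is isolated. -/
theorem stmt2 {G : Type*} [AddCommGroup G] [TopologicalSpace G] [IsTopologicalAddGroup G]
    [T2Space G] (hbool : ∀ g : G, g + g = 0)
    (hhed : ∀ Y : Set G, ExtremallyDisconnected Y)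
    (S : Set G) (hScl : IsClosed S)
    (hind : ∀ t : Finset G, ↑t ⊆ S → t.Nonempty → ∑ x ∈ t, x ≠ 0) :
    ∀ a ∈ S, ∀ b ∈ S, a ≠ b →
      (∃ U : Set G, IsOpen U ∧ U ∩ S = {a}) ∨ (∃ U : Set G, IsOpen U ∧ U ∩ S = {b}) := by
  classical
  intro a ha b hb hab
  by_contra hcon
  push_neg at hcon
  obtain ⟨hA, hB⟩ := hcon
  -- independence for pairs
  have two : ∀ x ∈ S, ∀ y ∈ S, x ≠ y → x + y ≠ 0 := by
    intro x hx y hy hxy h0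
    have h := hind {x, y} (by
      intro z hz
      simp only [Finset.coe_insert, Finset.coe_singleton, Set.mem_insert_iff,
        Set.mem_singleton_iff] at hz
      rcases hz with rfl | rfl <;> assumption) ⟨x, by simp⟩
    rw [Finset.sum_pair hxy] at h
    exact h h0
  -- independence for quadruples
  have four : ∀ w ∈ S, ∀ x ∈ S, ∀ y ∈ S, ∀ z ∈ S, w ≠ x → w ≠ y → w ≠ z →
      x ≠ y → x ≠ z → y ≠ z → w + x + y + z ≠ 0 := by
    intro w hw x hx y hy z hz hwx hwy hwz hxy hxz hyz h0
    have h := hind {w, x, y, z} (by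
      intro u hu
      simp only [Finset.coe_insert, Finset.coe_singleton, Set.mem_insert_iff,
        Set.mem_singleton_iff] at hu
      rcases hu with rfl | rfl | rfl | rfl <;> assumption) ⟨w, by simp⟩
    have hs : ∑ u ∈ ({w, x, y, z} : Finset G), u = w + x + y + z := by
      rw [Finset.sum_insert (by simp [hwx, hwy, hwz]),
        Finset.sum_insert (by simp [hxy, hxz]),
        Finset.sum_insert (by simp [hyz]), Finset.sum_singleton]
      abel
    rw [hs] at h
    exact h h0
  -- key algebraic lemma
  have key : ∀ c ∈ S, ∀ d ∈ S, c ≠ d → ∀ x, x ∈ S → x ≠ c → x ≠ d →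
      ∀ y ∈ S, x + c ≠ y + d := by
    intro c hc d hd hcd x hxS hxc hxd y hy heq
    by_cases hyx : y = x
    · exact hcd (add_left_cancel (a := x) (by rw [heq, hyx]))
    by_cases hyc : y = c
    · exact hxd (add_right_cancel (b := c) (by rw [heq, hyc, add_comm]))
    by_cases hyd : y = d
    · subst hyd
      have h0 : x + c = 0 := by rw [heq, hbool]
      exact two x hxS c hc hxc h0
    · have h0 : x + y + c + d = 0 := by
        have h1 : (x + c) + (y + d) = (y + d) + (y + d) := by rw [heq]
        rw [hbool] at h1
        calc x + y + c + d = (x + c) + (y + d) := by abel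
          _ = 0 := h1
      exact four x hxS y hy c hc d hd (Ne.symm hyx) hxc hxd
        (fun h => hyc h) (fun h => hyd h) hcd h0
  -- non-isolated points are in closure of complement
  have hnotiso : ∀ c ∈ S, (∀ U : Set G, IsOpen U → U ∩ S ≠ {c}) →
      c ∈ closure (S \ {c}) := by
    intro c hc hn
    rw [mem_closure_iff]
    intro U hU hcU
    by_contra hemp
    rw [Set.not_nonempty_iff_eq_empty] at hemp
    refine hn U hU ?_
    apply Set.eq_singleton_iff_unique_mem.mpr
    refine ⟨⟨hcU, hc⟩, ?_⟩
    intro z ⟨hzU, hzS⟩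
    by_contra hz
    have : z ∈ U ∩ (S \ {c}) := ⟨hzU, hzS, hz⟩
    rw [hemp] at this
    exact this
  set T : Set G := S \ {a, b} with hT
  have hTa : a ∈ closure T := by
    have h1 : a ∈ closure (S \ {a}) := hnotiso a ha hA
    have h2 : S \ {a} ⊆ T ∪ {b} := by
      intro z ⟨hzS, hza⟩
      by_cases hzb : z = b
      · exact Or.inr hzb
      · refine Or.inl ⟨hzS, ?_⟩
        simp only [Set.mem_insert_iff, Set.mem_singleton_iff, not_or]
        exact ⟨by simpa using hza, hzb⟩
    have h3 : a ∈ closure (T ∪ {b}) := closure_mono h2 h1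
    rw [closure_union, closure_singleton] at h3
    rcases h3 with h | h
    · exact h
    · exact absurd h hab
  have hTb : b ∈ closure T := by
    have h1 : b ∈ closure (S \ {b}) := hnotiso b hb hB
    have h2 : S \ {b} ⊆ T ∪ {a} := by
      intro z ⟨hzS, hzb⟩
      by_cases hza : z = a
      · exact Or.inr hza
      · refine Or.inl ⟨hzS, ?_⟩
        simp only [Set.mem_insert_iff, Set.mem_singleton_iff, not_or]
        exact ⟨hza, by simpa using hzb⟩
    have h3 : b ∈ closure (T ∪ {a}) := closure_mono h2 h1
    rw [closure_union, closure_singleton] at h3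
    rcases h3 with h | h
    · exact h
    · exact absurd h.symm hab
  -- translated sets
  set A' : Set G := (Homeomorph.addRight a) '' T with hA'
  set B' : Set G := (Homeomorph.addRight b) '' T with hB'
  have hclA : closure A' = (Homeomorph.addRight a) '' closure T :=
    ((Homeomorph.addRight a).image_closure T).symm
  have hclB : closure B' = (Homeomorph.addRight b) '' closure T :=
    ((Homeomorph.addRight b).image_closure T).symm
  have h0A : (0 : G) ∈ closure A' := by
    rw [hclA]
    exact ⟨a, hTa, by simp [hbool a]⟩
  have h0B : (0 : G) ∈ closure B' := by
    rw [hclB]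
    exact ⟨b, hTb, by simp [hbool b]⟩
  -- closure bounds
  have hclAsub : closure A' ⊆ (Homeomorph.addRight a) '' S := by
    apply closure_minimal (Set.image_mono Set.diff_subset)
    exact (Homeomorph.addRight a).isClosedMap S hScl
  have hclBsub : closure B' ⊆ (Homeomorph.addRight b) '' S := by
    apply closure_minimal (Set.image_mono Set.diff_subset)
    exact (Homeomorph.addRight b).isClosedMap S hScl
  -- A' is disjoint from closure B' and vice versa
  have hdAB : ∀ z ∈ A', z ∉ closure B' := by
    intro z ⟨x, hx, hxz⟩ hzB
    obtain ⟨y, hy, hyz⟩ := hclBsub hzB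
    have hx' : x ∈ S ∧ x ≠ a ∧ x ≠ b := by
      obtain ⟨hxS, hxab⟩ := hx
      simp only [Set.mem_insert_iff, Set.mem_singleton_iff, not_or] at hxab
      exact ⟨hxS, hxab⟩
    exact key a ha b hb hab x hx'.1 hx'.2.1 hx'.2.2 y hy (by
      simp only [Homeomorph.coe_addRight] at hxz hyz
      rw [hxz, hyz])
  have hdBA : ∀ z ∈ B', z ∉ closure A' := by
    intro z ⟨x, hx, hxz⟩ hzA
    obtain ⟨y, hy, hyz⟩ := hclAsub hzA
    have hx' : x ∈ S ∧ x ≠ a ∧ x ≠ b := by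
      obtain ⟨hxS, hxab⟩ := hx
      simp only [Set.mem_insert_iff, Set.mem_singleton_iff, not_or] at hxab
      exact ⟨hxS, hxab⟩
    exact key b hb a ha hab.symm x hx'.1 hx'.2.2 hx'.2.1 y hy (by
      simp only [Homeomorph.coe_addRight] at hxz hyz
      rw [hxz, hyz])
  -- the subspace Z
  set Z : Set G := A' ∪ B' ∪ {0} with hZ
  haveI hed : ExtremallyDisconnected Z := hhed Z
  set U : Set Z := Subtype.val ⁻¹' (closure B')ᶜ with hU
  set V : Set Z := Subtype.val ⁻¹' (closure A')ᶜ with hV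
  have hUopen : IsOpen U := (isClosed_closure.isOpen_compl).preimage continuous_subtype_val
  have hVopen : IsOpen V := (isClosed_closure.isOpen_compl).preimage continuous_subtype_val
  have hUV : U ∩ V = ∅ := by
    ext ⟨z, hz⟩
    simp only [hU, hV, Set.mem_inter_iff, Set.mem_preimage, Set.mem_compl_iff,
      Set.mem_empty_iff_false, iff_false, not_and, not_not]
    intro hzB'
    rcases hz with (hz | hz) | hz
    · exact subset_closure hz
    · exact absurd (subset_closure hz) hzB'
    · rw [Set.mem_singleton_iff] at hz
      subst hz
      exact h0A
  have h0Z : (0 : G) ∈ Z := Or.inr rfl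
  set z0 : Z := ⟨0, h0Z⟩ with hz0
  have hz0U : z0 ∈ closure U := by
    rw [closure_subtype]
    apply closure_mono (show A' ⊆ Subtype.val '' U by
      intro x hx
      exact ⟨⟨x, Or.inl (Or.inl hx)⟩, hdAB x hx, rfl⟩)
    exact h0A
  have hz0V : z0 ∈ closure V := by
    rw [closure_subtype]
    apply closure_mono (show B' ⊆ Subtype.val '' V by
      intro x hx
      exact ⟨⟨x, Or.inl (Or.inr hx)⟩, hdBA x hx, rfl⟩)
    exact h0B
  -- extremal disconnectedness: disjoint open sets have disjoint closures
  have hclUopen : IsOpen (closure U) := hed.open_closure U hUopen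
  have hclU_V : closure U ∩ V = ∅ := by
    have : U ⊆ Vᶜ := fun x hx hxV => by
      have : x ∈ U ∩ V := ⟨hx, hxV⟩
      rw [hUV] at this; exact this
    have := closure_minimal this hVopen.isClosed_compl
    ext x
    simp only [Set.mem_inter_iff, Set.mem_empty_iff_false, iff_false, not_and]
    exact fun hx => this hx
  have hfinal : closure U ∩ closure V = ∅ := by
    have hsub : V ⊆ (closure U)ᶜ := fun x hxV hxU => by
      have : x ∈ closure U ∩ V := ⟨hxU, hxV⟩
      rw [hclU_V] at this; exact this
    have := closure_minimal hsub hclUopen.isClosed_compl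
    ext x
    simp only [Set.mem_inter_iff, Set.mem_empty_iff_false, iff_false, not_and]
    exact fun hxU hxV => this hxV hxU
  have : z0 ∈ closure U ∩ closure V := ⟨hz0U, hz0V⟩
  rw [hfinal] at this
  exact this
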